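/- Consider the three-cell partitions of M = {1,2,3}: if Δ(S) = (1/2)(H(X_1)+H(X_2)+H(X_3)−H(X_{{1,2,3}})) satisfies both Δ(S) ≥ I(X_{{1,2}};X_3) and Δ(S) ≥ I(X_{{1,3}};X_2), then Δ(S) = I(X_{{1,2}};X_3) = I(X_{{1,3}};X_2) = I(X_1;X_2), and I(X_{{2,3}};X_1) ≥ I(X_1;X_2). In particular, the minimum of {I(X_{{1,2}};X_3), I(X_{{1,3}};X_2), I(X_{{2,3}};X_1), Δ(S)} equals I(X_1;X_2). -/

import Mathlib

open Finset

/-- The probability that the random variable `X` takes the value `a`. -/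
noncomputable def prb {Ω α : Type*} [Fintype Ω] [DecidableEq α]
    (p : Ω → ℝ) (X : Ω → α) (a : α) : ℝ :=
  ∑ ω ∈ Finset.univ.filter (fun ω => X ω = a), p ω

/-- Shannon entropy of a random variable `X` on a finite probability space. -/
noncomputable def ent {Ω α : Type*} [Fintype Ω] [Fintype α] [DecidableEq α]
    (p : Ω → ℝ) (X : Ω → α) : ℝ :=
  ∑ a : α, Real.negMulLog (prb p X a)

/-- Mutual information `I(X;Y) = H(X) + H(Y) - H(X,Y)`. -/
noncomputable def mi {Ω α β : Type*} [Fintype Ω] [Fintype α] [DecidableEq α]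
    [Fintype β] [DecidableEq β] (p : Ω → ℝ) (X : Ω → α) (Y : Ω → β) : ℝ :=
  ent p X + ent p Y - ent p (fun ω => (X ω, Y ω))

/-- Conditional mutual information `I(X;Y|W) = H(X,W) + H(Y,W) - H(X,Y,W) - H(W)`. -/
noncomputable def cmi {Ω α β γ : Type*} [Fintype Ω] [Fintype α] [DecidableEq α]
    [Fintype β] [DecidableEq β] [Fintype γ] [DecidableEq γ]
    (p : Ω → ℝ) (X : Ω → α) (Y : Ω → β) (W : Ω → γ) : ℝ :=
  ent p (fun ω => (X ω, W ω)) + ent p (fun ω => (Y ω, W ω))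
    - ent p (fun ω => (X ω, Y ω, W ω)) - ent p W

/-- Conditional entropy `H(X|Y) = H(X,Y) - H(Y)`. -/
noncomputable def condEnt {Ω α β : Type*} [Fintype Ω] [Fintype α] [DecidableEq α]
    [Fintype β] [DecidableEq β] (p : Ω → ℝ) (X : Ω → α) (Y : Ω → β) : ℝ :=
  ent p (fun ω => (X ω, Y ω)) - ent p Y

set_option linter.unusedSectionVars false

lemma pt_ineq (q a b s : ℝ) (hq : 0 ≤ q) (ha0 : 0 ≤ a) (hb0 : 0 ≤ b) (hs0 : 0 ≤ s)
    (ha : q ≤ a) (hb : q ≤ b) (has : a ≤ s) :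
    q - a * b / s ≤ q * (Real.log q + Real.log s - Real.log a - Real.log b) := by
  rcases hq.eq_or_lt with h | hq'
  · have : 0 ≤ a * b / s := div_nonneg (mul_nonneg ha0 hb0) hs0
    simp [← h]; linarith
  · have hA : 0 < a := lt_of_lt_of_le hq' ha
    have hB : 0 < b := lt_of_lt_of_le hq' hb
    have hS : 0 < s := lt_of_lt_of_le hA has
    have hlog : Real.log (a * b / (q * s)) ≤ a * b / (q * s) - 1 :=
      Real.log_le_sub_one_of_pos (by positivity)
    have hexp : Real.log (a * b / (q * s))
        = Real.log a + Real.log b - Real.log q - Real.log s := by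
      rw [Real.log_div (by positivity) (by positivity), Real.log_mul hA.ne' hB.ne',
        Real.log_mul hq'.ne' hS.ne']
      ring
    rw [hexp] at hlog
    have h2 : q * (a * b / (q * s)) = a * b / s := by
      field_simp
    nlinarith [mul_le_mul_of_nonneg_left hlog hq'.le]

section
variable {α β γ : Type*} [Fintype α] [Fintype β] [Fintype γ]

lemma swap12 (f : α → β → γ → ℝ) :
    ∑ x, ∑ y, ∑ w, f x y w = ∑ y, ∑ x, ∑ w, f x y w := Finset.sum_comm

lemma swap23 (f : α → β → γ → ℝ) :
    ∑ x, ∑ y, ∑ w, f x y w = ∑ x, ∑ w, ∑ y, f x y w :=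
  Finset.sum_congr rfl fun _ _ => Finset.sum_comm

lemma sum_rot (f : α → β → γ → ℝ) :
    ∑ x, ∑ y, ∑ w, f x y w = ∑ w, ∑ x, ∑ y, f x y w :=
  (swap23 f).trans (swap12 _)

lemma submod (q : α → β → γ → ℝ) (hq : ∀ x y w, 0 ≤ q x y w) :
    ∑ w, Real.negMulLog (∑ x, ∑ y, q x y w) + ∑ x, ∑ y, ∑ w, Real.negMulLog (q x y w)
      ≤ ∑ x, ∑ w, Real.negMulLog (∑ y, q x y w)
        + ∑ y, ∑ w, Real.negMulLog (∑ x, q x y w) := by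
  set a : α → γ → ℝ := fun x w => ∑ y, q x y w with ha
  set b : β → γ → ℝ := fun y w => ∑ x, q x y w with hb
  set s : γ → ℝ := fun w => ∑ x, ∑ y, q x y w with hs
  have ha0 : ∀ x w, 0 ≤ a x w := fun x w => Finset.sum_nonneg fun y _ => hq x y w
  have hb0 : ∀ y w, 0 ≤ b y w := fun y w => Finset.sum_nonneg fun x _ => hq x y w
  have hs0 : ∀ w, 0 ≤ s w := fun w => Finset.sum_nonneg fun x _ => ha0 x w
  have e1 : ∑ x, ∑ y, ∑ w, (-(q x y w * Real.log (a x w)))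
      = ∑ x, ∑ w, Real.negMulLog (a x w) := by
    refine Finset.sum_congr rfl fun x _ => ?_
    rw [Finset.sum_comm]
    refine Finset.sum_congr rfl fun w _ => ?_
    simp [ha, Real.negMulLog, neg_mul, Finset.sum_mul]
  have e2 : ∑ x, ∑ y, ∑ w, (-(q x y w * Real.log (b y w)))
      = ∑ y, ∑ w, Real.negMulLog (b y w) := by
    rw [swap12 (fun x y w => (-(q x y w * Real.log (b y w))))]
    refine Finset.sum_congr rfl fun y _ => ?_
    rw [Finset.sum_comm]
    refine Finset.sum_congr rfl fun w _ => ?_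
    simp [hb, Real.negMulLog, neg_mul, Finset.sum_mul]
  have e3 : ∑ x, ∑ y, ∑ w, (q x y w * Real.log (s w))
      = -∑ w, Real.negMulLog (s w) := by
    rw [sum_rot (fun x y w => q x y w * Real.log (s w)), ← Finset.sum_neg_distrib]
    refine Finset.sum_congr rfl fun w _ => ?_
    simp [hs, Real.negMulLog, neg_mul, Finset.sum_mul]
  have e4 : ∑ x, ∑ y, ∑ w, (q x y w * Real.log (q x y w))
      = -∑ x, ∑ y, ∑ w, Real.negMulLog (q x y w) := by
    simp [Real.negMulLog]
  have split : ∑ x, ∑ y, ∑ w, (q x y w *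
        (Real.log (q x y w) + Real.log (s w) - Real.log (a x w) - Real.log (b y w)))
      = (∑ x, ∑ y, ∑ w, (q x y w * Real.log (q x y w)))
        + (∑ x, ∑ y, ∑ w, (q x y w * Real.log (s w)))
        + (∑ x, ∑ y, ∑ w, (-(q x y w * Real.log (a x w))))
        + (∑ x, ∑ y, ∑ w, (-(q x y w * Real.log (b y w)))) := by
    simp only [← Finset.sum_add_distrib]
    exact Finset.sum_congr rfl fun x _ => Finset.sum_congr rfl fun y _ =>
      Finset.sum_congr rfl fun w _ => by ring
  have key : ∑ x, ∑ y, ∑ w, (q x y w *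
        (Real.log (q x y w) + Real.log (s w) - Real.log (a x w) - Real.log (b y w)))
      = (∑ x, ∑ w, Real.negMulLog (a x w)) + (∑ y, ∑ w, Real.negMulLog (b y w))
        - (∑ w, Real.negMulLog (s w)) - ∑ x, ∑ y, ∑ w, Real.negMulLog (q x y w) := by
    rw [split, e1, e2, e3, e4]; ring
  have bound : ∑ x, ∑ y, ∑ w, (q x y w - a x w * b y w / s w)
      ≤ ∑ x, ∑ y, ∑ w, (q x y w *
        (Real.log (q x y w) + Real.log (s w) - Real.log (a x w) - Real.log (b y w))) := by
    refine Finset.sum_le_sum fun x _ => Finset.sum_le_sum fun y _ =>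
      Finset.sum_le_sum fun w _ => ?_
    exact pt_ineq _ _ _ _ (hq x y w) (ha0 x w) (hb0 y w) (hs0 w)
      (Finset.single_le_sum (fun y' _ => hq x y' w) (Finset.mem_univ y))
      (Finset.single_le_sum (fun x' _ => hq x' y w) (Finset.mem_univ x))
      (Finset.single_le_sum (fun x' _ => ha0 x' w) (Finset.mem_univ x))
  have zero : ∑ x, ∑ y, ∑ w, (q x y w - a x w * b y w / s w) = 0 := by
    have t1 : ∑ x, ∑ y, ∑ w, q x y w = ∑ w, s w := sum_rot q
    have t2 : ∑ x, ∑ y, ∑ w, (a x w * b y w / s w) = ∑ w, s w := by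
      rw [sum_rot (fun x y w => a x w * b y w / s w)]
      refine Finset.sum_congr rfl fun w _ => ?_
      have h3 : ∑ x, ∑ y, (a x w * b y w / s w) = (∑ x, a x w) * (∑ y, b y w) / s w := by
        rw [Finset.sum_mul_sum, Finset.sum_div]
        exact Finset.sum_congr rfl fun x _ => by rw [Finset.sum_div]
      rw [h3]
      have hsa : ∑ x, a x w = s w := rfl
      have hsb : ∑ y, b y w = s w := Finset.sum_comm
      rw [hsa, hsb]
      rcases (hs0 w).eq_or_lt with h | h
      · simp [← h]
      · field_simp
    simp only [Finset.sum_sub_distrib]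
    rw [t1, t2]; ring
  linarith [key, bound, zero]

end

section
variable {Ω α β γ : Type*} [Fintype Ω] [Fintype α] [DecidableEq α]
    [Fintype β] [DecidableEq β] [Fintype γ] [DecidableEq γ]

lemma prb_nonneg (p : Ω → ℝ) (hp0 : ∀ ω, 0 ≤ p ω) (X : Ω → α) (a : α) :
    0 ≤ prb p X a := Finset.sum_nonneg fun ω _ => hp0 ω

lemma ent_comp_equiv (p : Ω → ℝ) (e : α ≃ β) (X : Ω → α) (Y : Ω → β)
    (hYX : ∀ ω, Y ω = e (X ω)) : ent p Y = ent p X := by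
  have h : Y = fun ω => e (X ω) := funext hYX
  subst h
  rw [ent, ← Equiv.sum_comp e (fun b => Real.negMulLog (prb p (fun ω => e (X ω)) b))]
  refine Finset.sum_congr rfl fun a _ => ?_
  congr 1
  unfold prb
  refine Finset.sum_congr ?_ fun _ _ => rfl
  ext ω
  simp [e.injective.eq_iff]

lemma prb_margY (p : Ω → ℝ) (X : Ω → α) (Y : Ω → β) (W : Ω → γ) (x : α) (w : γ) :
    prb p (fun ω => (X ω, W ω)) (x, w)
      = ∑ y, prb p (fun ω => (X ω, Y ω, W ω)) (x, y, w) := by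
  simp only [prb, Finset.sum_filter]
  rw [Finset.sum_comm]
  refine Finset.sum_congr rfl fun ω _ => ?_
  by_cases h1 : X ω = x <;> by_cases h2 : W ω = w <;>
    simp [Prod.ext_iff, h1, h2, Finset.sum_ite_eq]

lemma prb_margX (p : Ω → ℝ) (X : Ω → α) (Y : Ω → β) (W : Ω → γ) (y : β) (w : γ) :
    prb p (fun ω => (Y ω, W ω)) (y, w)
      = ∑ x, prb p (fun ω => (X ω, Y ω, W ω)) (x, y, w) := by
  simp only [prb, Finset.sum_filter]
  rw [Finset.sum_comm]
  refine Finset.sum_congr rfl fun ω _ => ?_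
  by_cases h1 : Y ω = y <;> by_cases h2 : W ω = w <;>
    simp [Prod.ext_iff, h1, h2, Finset.sum_ite_eq]

lemma sum_rot' {M : Type*} [AddCommMonoid M] {α' β' γ' : Type*}
    [Fintype α'] [Fintype β'] [Fintype γ'] (f : α' → β' → γ' → M) :
    ∑ x, ∑ y, ∑ w, f x y w = ∑ w, ∑ x, ∑ y, f x y w :=
  (Finset.sum_congr rfl fun _ _ => Finset.sum_comm).trans Finset.sum_comm

lemma prb_margXY (p : Ω → ℝ) (X : Ω → α) (Y : Ω → β) (W : Ω → γ) (w : γ) :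
    prb p W w = ∑ x, ∑ y, prb p (fun ω => (X ω, Y ω, W ω)) (x, y, w) := by
  simp only [prb, Finset.sum_filter]
  rw [sum_rot' (fun x y ω => if (X ω, Y ω, W ω) = (x, y, w) then p ω else 0)]
  refine Finset.sum_congr rfl fun ω _ => ?_
  by_cases h2 : W ω = w <;>
    simp [Prod.ext_iff, h2, ite_and, Finset.sum_ite_eq]

lemma cmi_nonneg (p : Ω → ℝ) (hp0 : ∀ ω, 0 ≤ p ω)
    (X : Ω → α) (Y : Ω → β) (W : Ω → γ) : 0 ≤ cmi p X Y W := by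
  set q : α → β → γ → ℝ := fun x y w => prb p (fun ω => (X ω, Y ω, W ω)) (x, y, w) with hqdef
  have hq : ∀ x y w, 0 ≤ q x y w := fun x y w => prb_nonneg p hp0 _ _
  have hXW : ent p (fun ω => (X ω, W ω)) = ∑ x, ∑ w, Real.negMulLog (∑ y, q x y w) := by
    rw [ent, Fintype.sum_prod_type]
    exact Finset.sum_congr rfl fun x _ => Finset.sum_congr rfl fun w _ => by
      rw [prb_margY p X Y W x w]
  have hYW : ent p (fun ω => (Y ω, W ω)) = ∑ y, ∑ w, Real.negMulLog (∑ x, q x y w) := by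
    rw [ent, Fintype.sum_prod_type]
    exact Finset.sum_congr rfl fun y _ => Finset.sum_congr rfl fun w _ => by
      rw [prb_margX p X Y W y w]
  have hW : ent p W = ∑ w, Real.negMulLog (∑ x, ∑ y, q x y w) := by
    rw [ent]
    exact Finset.sum_congr rfl fun w _ => by rw [prb_margXY p X Y W w]
  have hXYW : ent p (fun ω => (X ω, Y ω, W ω))
      = ∑ x, ∑ y, ∑ w, Real.negMulLog (q x y w) := by
    rw [ent, Fintype.sum_prod_type]
    exact Finset.sum_congr rfl fun x _ => Fintype.sum_prod_type _
  have h := submod q hq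
  rw [cmi, hXW, hYW, hW, hXYW]
  linarith

end

/-- If `Δ(S) ≥ I(X_{1,2};X_3)` and `Δ(S) ≥ I(X_{1,3};X_2)`, then
`Δ(S) = I(X_{1,2};X_3) = I(X_{1,3};X_2) = I(X_1;X_2)`,
`I(X_{2,3};X_1) ≥ I(X_1;X_2)`, and the minimum of the four quantities
`I(X_{1,2};X_3), I(X_{1,3};X_2), I(X_{2,3};X_1), Δ(S)` equals `I(X_1;X_2)`. -/
theorem case1_min_eq {Ω α β γ : Type*} [Fintype Ω] [Fintype α] [DecidableEq α]
    [Fintype β] [DecidableEq β] [Fintype γ] [DecidableEq γ]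
    (p : Ω → ℝ) (hp0 : ∀ ω, 0 ≤ p ω) (hp1 : ∑ ω : Ω, p ω = 1)
    (X1 : Ω → α) (X2 : Ω → β) (X3 : Ω → γ)
    (h1 : mi p (fun ω => (X1 ω, X2 ω)) X3
      ≤ (1/2) * (ent p X1 + ent p X2 + ent p X3 - ent p (fun ω => (X1 ω, X2 ω, X3 ω))))
    (h2 : mi p (fun ω => (X1 ω, X3 ω)) X2
      ≤ (1/2) * (ent p X1 + ent p X2 + ent p X3 - ent p (fun ω => (X1 ω, X2 ω, X3 ω)))) :
    (1/2) * (ent p X1 + ent p X2 + ent p X3 - ent p (fun ω => (X1 ω, X2 ω, X3 ω)))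
        = mi p (fun ω => (X1 ω, X2 ω)) X3
    ∧ mi p (fun ω => (X1 ω, X2 ω)) X3 = mi p (fun ω => (X1 ω, X3 ω)) X2
    ∧ mi p (fun ω => (X1 ω, X3 ω)) X2 = mi p X1 X2
    ∧ mi p X1 X2 ≤ mi p (fun ω => (X2 ω, X3 ω)) X1
    ∧ min (min (mi p (fun ω => (X1 ω, X2 ω)) X3) (mi p (fun ω => (X1 ω, X3 ω)) X2))
        (min (mi p (fun ω => (X2 ω, X3 ω)) X1)
          ((1/2) * (ent p X1 + ent p X2 + ent p X3
            - ent p (fun ω => (X1 ω, X2 ω, X3 ω)))))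
      = mi p X1 X2 := by
  -- entropy re-association / permutation identities
  have E1 : ent p (fun ω => ((X1 ω, X2 ω), X3 ω)) = ent p (fun ω => (X1 ω, X2 ω, X3 ω)) :=
    ent_comp_equiv p ⟨fun t => ((t.1, t.2.1), t.2.2), fun t => (t.1.1, t.1.2, t.2),
      fun t => rfl, fun t => rfl⟩ (fun ω => (X1 ω, X2 ω, X3 ω)) _ (fun ω => rfl)
  have E2 : ent p (fun ω => ((X1 ω, X3 ω), X2 ω)) = ent p (fun ω => (X1 ω, X2 ω, X3 ω)) :=
    ent_comp_equiv p ⟨fun t => ((t.1, t.2.2), t.2.1), fun t => (t.1.1, t.2, t.1.2),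
      fun t => rfl, fun t => rfl⟩ (fun ω => (X1 ω, X2 ω, X3 ω)) _ (fun ω => rfl)
  have E3 : ent p (fun ω => ((X2 ω, X3 ω), X1 ω)) = ent p (fun ω => (X1 ω, X2 ω, X3 ω)) :=
    ent_comp_equiv p ⟨fun t => ((t.2.1, t.2.2), t.1), fun t => (t.2, t.1.1, t.1.2),
      fun t => rfl, fun t => rfl⟩ (fun ω => (X1 ω, X2 ω, X3 ω)) _ (fun ω => rfl)
  have E4 : ent p (fun ω => (X2 ω, X3 ω, X1 ω)) = ent p (fun ω => (X1 ω, X2 ω, X3 ω)) :=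
    ent_comp_equiv p ⟨fun t => (t.2.1, t.2.2, t.1), fun t => (t.2.2, t.1, t.2.1),
      fun t => rfl, fun t => rfl⟩ (fun ω => (X1 ω, X2 ω, X3 ω)) _ (fun ω => rfl)
  have E5 : ent p (fun ω => (X2 ω, X1 ω)) = ent p (fun ω => (X1 ω, X2 ω)) :=
    ent_comp_equiv p ⟨fun t => (t.2, t.1), fun t => (t.2, t.1),
      fun t => rfl, fun t => rfl⟩ (fun ω => (X1 ω, X2 ω)) _ (fun ω => rfl)
  have E6 : ent p (fun ω => (X3 ω, X1 ω)) = ent p (fun ω => (X1 ω, X3 ω)) :=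
    ent_comp_equiv p ⟨fun t => (t.2, t.1), fun t => (t.2, t.1),
      fun t => rfl, fun t => rfl⟩ (fun ω => (X1 ω, X3 ω)) _ (fun ω => rfl)
  have E7 : ent p (fun ω => (X1 ω, X3 ω, X2 ω)) = ent p (fun ω => (X1 ω, X2 ω, X3 ω)) :=
    ent_comp_equiv p ⟨fun t => (t.1, t.2.2, t.2.1), fun t => (t.1, t.2.2, t.2.1),
      fun t => rfl, fun t => rfl⟩ (fun ω => (X1 ω, X2 ω, X3 ω)) _ (fun ω => rfl)
  have E8 : ent p (fun ω => (X3 ω, X2 ω)) = ent p (fun ω => (X2 ω, X3 ω)) :=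
    ent_comp_equiv p ⟨fun t => (t.2, t.1), fun t => (t.2, t.1),
      fun t => rfl, fun t => rfl⟩ (fun ω => (X2 ω, X3 ω)) _ (fun ω => rfl)
  have A0 : 0 ≤ cmi p X2 X3 X1 := cmi_nonneg p hp0 X2 X3 X1
  have B0 : 0 ≤ cmi p X1 X3 X2 := cmi_nonneg p hp0 X1 X3 X2
  rw [cmi, E4, E5, E6] at A0
  rw [cmi, E7, E8] at B0
  simp only [mi] at h1 h2 ⊢
  rw [E1] at h1 ⊢
  rw [E2] at h2 ⊢
  rw [E3]
  set a1 := ent p X1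
  set a2 := ent p X2
  set a3 := ent p X3
  set a12 := ent p (fun ω => (X1 ω, X2 ω))
  set a13 := ent p (fun ω => (X1 ω, X3 ω))
  set a23 := ent p (fun ω => (X2 ω, X3 ω))
  set a123 := ent p (fun ω => (X1 ω, X2 ω, X3 ω))
  refine ⟨by linarith, by linarith, by linarith, by linarith, ?_⟩
  have g1 : a12 + a3 - a123 = a1 + a2 - a12 := by linarith
  have g2 : a13 + a2 - a123 = a1 + a2 - a12 := by linarith
  have g3 : (1/2 : ℝ) * (a1 + a2 + a3 - a123) = a1 + a2 - a12 := by linarith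
  have g4 : a1 + a2 - a12 ≤ a23 + a1 - a123 := by linarith
  rw [g1, g2, g3, min_self, min_eq_right g4, min_self]
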